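/- For every positive integer $D$ and every integer $k\ge 0$, $\lim_{n\to\infty}\ \frac1D\sum_{j=0}^{D-1}\sum_{h=0}^{n} 2^{-n}\binom{n}{h}\, e^{2i\pi\frac{j}{D}(h^2+kh)} = \frac{\rho_k(D)}{D}$. -/

import Mathlib

open Finset Filter

noncomputable section

/-- `ρ_k(D) = #{1 ≤ y ≤ D : D ∣ y² + k y}`. -/
def rhok (k D : ℕ) : ℕ := ((Finset.Icc 1 D).filter (fun y => D ∣ y ^ 2 + k * y)).card

/-- Geometric/orthogonality sum. -/
lemma sum_exp_eq (D : ℕ) (hD : 0 < D) (m : ℤ) :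
    ∑ j ∈ Finset.range D, Complex.exp (2 * Real.pi * Complex.I * (m : ℂ) / (D : ℂ)) ^ j
      = if (D : ℤ) ∣ m then (D : ℂ) else 0 := by
  have hD0 : (D : ℂ) ≠ 0 := Nat.cast_ne_zero.mpr hD.ne'
  set z := Complex.exp (2 * Real.pi * Complex.I * (m : ℂ) / (D : ℂ)) with hzdef
  by_cases h : (D : ℤ) ∣ m
  · obtain ⟨c, rfl⟩ := h
    have hz : z = 1 := by
      rw [hzdef]
      have : 2 * (Real.pi : ℂ) * Complex.I * ((D * c : ℤ) : ℂ) / (D : ℂ)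
          = (c : ℂ) * (2 * Real.pi * Complex.I) := by
        push_cast
        field_simp
      rw [this, Complex.exp_int_mul_two_pi_mul_I]
    simp [hz]
  · have hz1 : z ≠ 1 := by
      intro hz
      rw [hzdef, Complex.exp_eq_one_iff] at hz
      obtain ⟨n, hn⟩ := hz
      apply h
      refine ⟨n, ?_⟩
      have hm : (m : ℂ) = (n : ℂ) * (D : ℂ) := by
        have hpi : (Real.pi : ℂ) ≠ 0 := Complex.ofReal_ne_zero.mpr Real.pi_ne_zero
        field_simp at hn
        have h2 : (2 : ℂ) * Real.pi * Complex.I ≠ 0 := by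
          simp [hpi, Complex.I_ne_zero]
        apply mul_left_cancel₀ h2
        linear_combination (2 * Real.pi * Complex.I) * hn
      rw [mul_comm]; exact_mod_cast hm
    have hzD : z ^ D = 1 := by
      rw [hzdef, ← Complex.exp_nat_mul]
      have : (D : ℂ) * (2 * Real.pi * Complex.I * (m : ℂ) / (D : ℂ))
          = (m : ℂ) * (2 * Real.pi * Complex.I) := by
        field_simp
      rw [this, Complex.exp_int_mul_two_pi_mul_I]
    rw [geom_sum_eq hz1, hzD]
    simp [h]

/-- Binomial theorem form. -/
lemma binom_sum (z : ℂ) (n : ℕ) :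
    ∑ h ∈ Finset.range (n + 1), ((n.choose h : ℂ) / 2 ^ n) * z ^ h = ((1 + z) / 2) ^ n := by
  rw [div_pow, add_comm (1:ℂ) z, add_pow]
  rw [Finset.sum_div]
  refine Finset.sum_congr rfl fun h _ => ?_
  simp
  ring

/-- Strict norm bound. -/
lemma norm_half_one_add_exp_lt (D t : ℕ) (ht0 : 0 < t) (htD : t < D) :
    ‖(1 + Complex.exp (2 * Real.pi * Complex.I * (t : ℂ) / (D : ℂ))) / 2‖ < 1 := by
  have hDpos : (0:ℝ) < D := by exact_mod_cast ht0.trans htD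
  have hD0 : (D : ℂ) ≠ 0 := Nat.cast_ne_zero.mpr (by omega)
  set θ : ℝ := 2 * Real.pi * t / D with hθdef
  have harg : 2 * Real.pi * Complex.I * (t : ℂ) / (D : ℂ) = (θ : ℝ) * Complex.I := by
    rw [hθdef]
    push_cast
    field_simp
  have hθpos : 0 < θ := by
    rw [hθdef]
    positivity
  have hθlt : θ < 2 * Real.pi := by
    rw [hθdef, div_lt_iff₀ hDpos]
    have : (t:ℝ) < (D:ℝ) := by exact_mod_cast htD
    nlinarith [Real.pi_pos]
  have hcos : Real.cos θ < 1 := by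
    rcases lt_or_eq_of_le (Real.cos_le_one θ) with h | h
    · exact h
    · exfalso
      have := (Real.cos_eq_one_iff_of_lt_of_lt (by linarith [Real.pi_pos]) hθlt).mp h
      linarith
  rw [harg, Complex.exp_mul_I]
  have hre : (1 + (Complex.cos θ + Complex.sin θ * Complex.I)).re = 1 + Real.cos θ := by
    simp [Complex.cos_ofReal_re]
  have him : (1 + (Complex.cos θ + Complex.sin θ * Complex.I)).im = Real.sin θ := by
    simp [Complex.sin_ofReal_re, Complex.cos_ofReal_im]
  have hsq : ‖(1 + (Complex.cos θ + Complex.sin θ * Complex.I)) / 2‖ ^ 2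
      = (2 + 2 * Real.cos θ) / 4 := by
    rw [Complex.sq_norm, Complex.normSq_apply]
    rw [Complex.div_re, Complex.div_im]
    simp [hre, him, Complex.normSq_apply]
    nlinarith [Real.sin_sq_add_cos_sq θ]
  nlinarith [norm_nonneg ((1 + (Complex.cos θ + Complex.sin θ * Complex.I)) / 2), hsq]

lemma char_sum (D : ℕ) (hD : 0 < D) (a h : ℕ) :
    ∑ t ∈ Finset.range D, Complex.exp (2 * Real.pi * Complex.I * (t : ℂ) / (D : ℂ)) ^ h
        * Complex.exp (-(2 * Real.pi * Complex.I * (t : ℂ) * (a : ℂ) / (D : ℂ)))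
      = if h % D = a % D then (D : ℂ) else 0 := by
  have hiff : ((D : ℤ) ∣ (h : ℤ) - (a : ℤ)) ↔ h % D = a % D := by
    constructor
    · intro hdvd
      have : a ≡ h [MOD D] := (Nat.modEq_iff_dvd).mpr hdvd
      exact this.symm
    · intro he
      have : a ≡ h [MOD D] := he.symm
      exact (Nat.modEq_iff_dvd).mp this
  have hif : (if h % D = a % D then (D : ℂ) else 0)
      = (if (D : ℤ) ∣ (h : ℤ) - (a : ℤ) then (D : ℂ) else 0) := by
    simp only [hiff]
  rw [hif, ← sum_exp_eq D hD ((h : ℤ) - (a : ℤ))]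
  refine Finset.sum_congr rfl fun t _ => ?_
  rw [← Complex.exp_nat_mul, ← Complex.exp_nat_mul, ← Complex.exp_add]
  congr 1
  have hD0 : (D : ℂ) ≠ 0 := Nat.cast_ne_zero.mpr hD.ne'
  push_cast
  field_simp
  ring

lemma Ga_tendsto (D : ℕ) (hD : 0 < D) (a : ℕ) :
    Tendsto (fun n : ℕ => ∑ h ∈ Finset.range (n + 1),
      ((n.choose h : ℂ) / 2 ^ n) * (if h % D = a % D then (1 : ℂ) else 0))
      atTop (nhds (1 / (D : ℂ))) := by
  have hD0 : (D : ℂ) ≠ 0 := Nat.cast_ne_zero.mpr hD.ne'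
  have key : ∀ n : ℕ, (∑ h ∈ Finset.range (n + 1),
      ((n.choose h : ℂ) / 2 ^ n) * (if h % D = a % D then (1 : ℂ) else 0))
      = (1 / (D : ℂ)) * ∑ t ∈ Finset.range D,
          Complex.exp (-(2 * Real.pi * Complex.I * (t : ℂ) * (a : ℂ) / (D : ℂ))) *
            ((1 + Complex.exp (2 * Real.pi * Complex.I * (t : ℂ) / (D : ℂ))) / 2) ^ n := by
    intro n
    have step1 : ∀ h : ℕ, ((n.choose h : ℂ) / 2 ^ n) * (if h % D = a % D then (1 : ℂ) else 0)
        = ∑ t ∈ Finset.range D, (1 / (D : ℂ)) *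
            (Complex.exp (-(2 * Real.pi * Complex.I * (t : ℂ) * (a : ℂ) / (D : ℂ))) *
              (((n.choose h : ℂ) / 2 ^ n) *
                Complex.exp (2 * Real.pi * Complex.I * (t : ℂ) / (D : ℂ)) ^ h)) := by
      intro h
      have h2 : (if h % D = a % D then (1 : ℂ) else 0)
          = (1 / (D : ℂ)) * (if h % D = a % D then (D : ℂ) else 0) := by
        split <;> field_simp <;> simp
      rw [h2, ← char_sum D hD a h]
      simp only [Finset.mul_sum]
      refine Finset.sum_congr rfl fun t _ => by ring
    rw [Finset.sum_congr rfl fun h _ => step1 h, Finset.sum_comm]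
    simp only [Finset.mul_sum]
    refine Finset.sum_congr rfl fun t _ => ?_
    rw [← binom_sum (Complex.exp (2 * Real.pi * Complex.I * (t : ℂ) / (D : ℂ))) n]
    simp only [Finset.mul_sum]
  have lim : Tendsto (fun n : ℕ => ∑ t ∈ Finset.range D,
      Complex.exp (-(2 * Real.pi * Complex.I * (t : ℂ) * (a : ℂ) / (D : ℂ))) *
        ((1 + Complex.exp (2 * Real.pi * Complex.I * (t : ℂ) / (D : ℂ))) / 2) ^ n)
      atTop (nhds (∑ t ∈ Finset.range D, if t = 0 then (1 : ℂ) else 0)) := by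
    apply tendsto_finset_sum
    intro t ht
    by_cases h0 : t = 0
    · subst h0
      have hconst : ∀ n : ℕ,
          Complex.exp (-(2 * Real.pi * Complex.I * ((0 : ℕ) : ℂ) * (a : ℂ) / (D : ℂ))) *
            ((1 + Complex.exp (2 * Real.pi * Complex.I * ((0 : ℕ) : ℂ) / (D : ℂ))) / 2) ^ n
            = 1 := by
        intro n
        norm_num
      refine Tendsto.congr (fun n => (hconst n).symm) ?_
      simpa using tendsto_const_nhds (x := (1 : ℂ))
    · rw [if_neg h0]
      have hlt := norm_half_one_add_exp_lt D t (Nat.pos_of_ne_zero h0) (Finset.mem_range.mp ht)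
      have := (tendsto_pow_atTop_nhds_zero_of_norm_lt_one hlt).const_mul
        (Complex.exp (-(2 * Real.pi * Complex.I * (t : ℂ) * (a : ℂ) / (D : ℂ))))
      simpa using this
  have hsum : (∑ t ∈ Finset.range D, if t = 0 then (1 : ℂ) else 0) = 1 := by
    rw [Finset.sum_ite_eq' (Finset.range D) 0 (fun _ => (1 : ℂ))]
    simp [Finset.mem_range, hD]
  have lim2 := lim.const_mul (1 / (D : ℂ))
  rw [hsum, mul_one] at lim2
  exact lim2.congr fun n => (key n).symm

lemma dvd_mod_iff (D k h : ℕ) : D ∣ (h % D) ^ 2 + k * (h % D) ↔ D ∣ h ^ 2 + k * h := by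
  have h1 : ((((h % D) ^ 2 + k * (h % D) : ℕ)) : ZMod D) = ((h ^ 2 + k * h : ℕ) : ZMod D) := by
    push_cast
    rw [ZMod.natCast_mod]
  rw [← ZMod.natCast_eq_zero_iff, ← ZMod.natCast_eq_zero_iff, h1]

lemma card_residues (D k : ℕ) (hD : 0 < D) :
    ((Finset.range D).filter (fun a => D ∣ a ^ 2 + k * a)).card = rhok k D := by
  have h1 : (Finset.range D).filter (fun a => D ∣ a ^ 2 + k * a)
      = insert 0 ((Finset.Ico 1 D).filter (fun a => D ∣ a ^ 2 + k * a)) := by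
    ext x
    simp only [Finset.mem_filter, Finset.mem_range, Finset.mem_insert, Finset.mem_Ico]
    constructor
    · rintro ⟨hx, hdvd⟩
      rcases Nat.eq_zero_or_pos x with h0 | h0
      · exact Or.inl h0
      · exact Or.inr ⟨⟨h0, hx⟩, hdvd⟩
    · rintro (rfl | ⟨⟨ha, hb⟩, hdvd⟩)
      · exact ⟨hD, ⟨0, by ring⟩⟩
      · exact ⟨hb, hdvd⟩
  have h2 : (Finset.Icc 1 D).filter (fun y => D ∣ y ^ 2 + k * y)
      = insert D ((Finset.Ico 1 D).filter (fun a => D ∣ a ^ 2 + k * a)) := by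
    ext x
    simp only [Finset.mem_filter, Finset.mem_Icc, Finset.mem_insert, Finset.mem_Ico]
    constructor
    · rintro ⟨⟨hx1, hx2⟩, hdvd⟩
      rcases eq_or_lt_of_le hx2 with h0 | h0
      · exact Or.inl h0
      · exact Or.inr ⟨⟨hx1, h0⟩, hdvd⟩
    · rintro (rfl | ⟨⟨ha, hb⟩, hdvd⟩)
      · exact ⟨⟨hD, le_refl _⟩, ⟨x + k, by ring⟩⟩
      · exact ⟨⟨ha, hb.le⟩, hdvd⟩
  rw [rhok, h1, h2,
    Finset.card_insert_of_notMem (by simp), Finset.card_insert_of_notMem (by simp)]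

/-- Corollary 2.12, the Euler means of the quadratic exponential sums
converge to `ρ_k(D)/D`. -/
theorem euler_mean_quadratic_exponential_tendsto_rhok (D : ℕ) (hD : 0 < D) (k : ℕ) :
    Tendsto
      (fun n : ℕ => (1 / (D : ℂ)) * ∑ j ∈ Finset.range D,
        ∑ h ∈ Finset.range (n + 1), ((n.choose h : ℂ) / 2 ^ n) *
          Complex.exp (2 * Real.pi * Complex.I * (j : ℂ) / (D : ℂ)
            * ((h : ℂ) ^ 2 + (k : ℂ) * (h : ℂ))))
      atTop (nhds ((rhok k D : ℂ) / (D : ℂ))) := by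
  have hD0 : (D : ℂ) ≠ 0 := Nat.cast_ne_zero.mpr hD.ne'
  have inner : ∀ h : ℕ, (∑ j ∈ Finset.range D,
      Complex.exp (2 * Real.pi * Complex.I * (j : ℂ) / (D : ℂ)
        * ((h : ℂ) ^ 2 + (k : ℂ) * (h : ℂ))))
      = if D ∣ h ^ 2 + k * h then (D : ℂ) else 0 := by
    intro h
    have hs : (∑ j ∈ Finset.range D,
        Complex.exp (2 * Real.pi * Complex.I * (j : ℂ) / (D : ℂ)
          * ((h : ℂ) ^ 2 + (k : ℂ) * (h : ℂ))))
        = if (D : ℤ) ∣ ((h ^ 2 + k * h : ℕ) : ℤ) then (D : ℂ) else 0 := by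
      rw [← sum_exp_eq D hD ((h ^ 2 + k * h : ℕ) : ℤ)]
      refine Finset.sum_congr rfl fun j _ => ?_
      rw [← Complex.exp_nat_mul]
      congr 1
      push_cast
      ring
    rw [hs]
    simp only [Int.natCast_dvd_natCast]
  have split : ∀ h : ℕ, (if D ∣ h ^ 2 + k * h then (1 : ℂ) else 0)
      = ∑ a ∈ Finset.range D, (if D ∣ a ^ 2 + k * a then (1 : ℂ) else 0) *
          (if h % D = a % D then (1 : ℂ) else 0) := by
    intro h
    have hmem : h % D ∈ Finset.range D := Finset.mem_range.mpr (Nat.mod_lt h hD)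
    rw [Finset.sum_eq_single (h % D)]
    · rw [Nat.mod_mod_of_dvd h (dvd_refl D), if_pos rfl, mul_one]
      by_cases hc : D ∣ h ^ 2 + k * h
      · rw [if_pos hc, if_pos ((dvd_mod_iff D k h).mpr hc)]
      · rw [if_neg hc, if_neg (fun hcc => hc ((dvd_mod_iff D k h).mp hcc))]
    · intro b hb hbne
      have hbD : b % D = b := Nat.mod_eq_of_lt (Finset.mem_range.mp hb)
      rw [hbD]
      exact mul_eq_zero_of_right _ (if_neg fun hcc => hbne hcc.symm)
    · intro habs
      exact absurd hmem habs
  have key : ∀ n : ℕ, ((1 / (D : ℂ)) * ∑ j ∈ Finset.range D,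
      ∑ h ∈ Finset.range (n + 1), ((n.choose h : ℂ) / 2 ^ n) *
        Complex.exp (2 * Real.pi * Complex.I * (j : ℂ) / (D : ℂ)
          * ((h : ℂ) ^ 2 + (k : ℂ) * (h : ℂ))))
      = ∑ a ∈ Finset.range D, (if D ∣ a ^ 2 + k * a then (1 : ℂ) else 0) *
          ∑ h ∈ Finset.range (n + 1),
            ((n.choose h : ℂ) / 2 ^ n) * (if h % D = a % D then (1 : ℂ) else 0) := by
    intro n
    rw [Finset.sum_comm]
    have e1 : ∀ h : ℕ, (∑ j ∈ Finset.range D, ((n.choose h : ℂ) / 2 ^ n) *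
        Complex.exp (2 * Real.pi * Complex.I * (j : ℂ) / (D : ℂ)
          * ((h : ℂ) ^ 2 + (k : ℂ) * (h : ℂ))))
        = ((n.choose h : ℂ) / 2 ^ n) * (if D ∣ h ^ 2 + k * h then (D : ℂ) else 0) := by
      intro h
      rw [← Finset.mul_sum, inner h]
    rw [Finset.sum_congr rfl fun h _ => e1 h]
    have e2 : ∀ h : ℕ, ((n.choose h : ℂ) / 2 ^ n) * (if D ∣ h ^ 2 + k * h then (D : ℂ) else 0)
        = (D : ℂ) * (((n.choose h : ℂ) / 2 ^ n) * (if D ∣ h ^ 2 + k * h then (1 : ℂ) else 0)) := by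
      intro h
      split <;> ring
    rw [Finset.sum_congr rfl fun h _ => e2 h, ← Finset.mul_sum, ← mul_assoc,
      one_div_mul_cancel hD0, one_mul]
    rw [Finset.sum_congr rfl fun h _ => by rw [split h]]
    simp only [Finset.mul_sum]
    rw [Finset.sum_comm]
    refine Finset.sum_congr rfl fun a _ => Finset.sum_congr rfl fun h _ => by ring
  refine Tendsto.congr (fun n => (key n).symm) ?_
  have lim : Tendsto (fun n : ℕ => ∑ a ∈ Finset.range D,
      (if D ∣ a ^ 2 + k * a then (1 : ℂ) else 0) *
        ∑ h ∈ Finset.range (n + 1),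
          ((n.choose h : ℂ) / 2 ^ n) * (if h % D = a % D then (1 : ℂ) else 0))
      atTop (nhds (∑ a ∈ Finset.range D,
        (if D ∣ a ^ 2 + k * a then (1 : ℂ) else 0) * (1 / (D : ℂ)))) := by
    apply tendsto_finset_sum
    intro a _
    exact (Ga_tendsto D hD a).const_mul _
  have hval : (∑ a ∈ Finset.range D,
      (if D ∣ a ^ 2 + k * a then (1 : ℂ) else 0) * (1 / (D : ℂ)))
      = (rhok k D : ℂ) / (D : ℂ) := by
    rw [← Finset.sum_mul, Finset.sum_boole, card_residues D k hD]
    ring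
  rw [← hval]
  exact lim
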